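/- Let v be a valuation on a field E with v(p) = 1 and let f(X) = 1 + c_1 X + c_2 X² + ... be a polynomial (or entire power series) over E. Fix t ≥ 1 and define h(nt + s) := t·n(n−1)/2 + n·s for integers n ≥ 0 and 0 ≤ s ≤ t. Suppose v(c_r) ≥ h(r) for all r ≥ 1, and v(c_{kt}) = h(kt) = t·k(k−1)/2 for all k ≥ 1 (in the range where c_{kt} is defined). Then for every n (with the (n+1)-st slope defined), the n-th slope of the Newton polygon of f (slopes listed in non-decreasing order, starting from index 0) lies in the interval [⌊n/t⌋, ⌊n/t⌋ + 1]. -/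

import Mathlib

/-- The additive valuation `v(x) = -log_p ‖x‖` associated to a nonarchimedean norm,
normalized so that `v(p) = 1` when `‖p‖ = p⁻¹`. -/
noncomputable def addVal (p : ℕ) {E : Type*} [NormedField E] (x : E) : ℝ :=
  -Real.logb p ‖x‖

/-- The Newton polygon of `f = 1 + Σ_{r≥1} c_r X^r` at abscissa `x`: the value at `x` of the
lower convex hull of the points `(r, v(c_r))` (for `c_r ≠ 0`), i.e. the supremum of `L(x)`
over all affine functions `L` lying below all these points. -/
noncomputable def newtonFn (p : ℕ) {E : Type*} [NormedField E]
    (f : PowerSeries E) (x : ℝ) : ℝ :=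
  sSup {y : ℝ | ∃ sl b : ℝ, y = sl * x + b ∧
    ∀ r : ℕ, PowerSeries.coeff (R := E) r f ≠ 0 →
      sl * r + b ≤ addVal p (PowerSeries.coeff (R := E) r f)}

/-- The barrier function `h(nt+s) = t·n(n−1)/2 + n·s` (for `n ≥ 0`, `0 ≤ s < t`),
evaluated via euclidean division. -/
def barrier (t r : ℕ) : ℕ := t * ((r / t) * (r / t - 1) / 2) + (r / t) * (r % t)

lemma barrier_two (t r : ℕ) :
    2 * (barrier t r : ℝ) =
      (t : ℝ) * (((r / t : ℕ) : ℝ) * (((r / t : ℕ) : ℝ) - 1)) +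
        2 * ((r / t : ℕ) : ℝ) * ((r % t : ℕ) : ℝ) := by
  unfold barrier
  cases hq : r / t with
  | zero => simp
  | succ mq =>
    have he : Even ((mq + 1) * mq) := by
      rcases Nat.even_or_odd mq with h | h
      · exact h.mul_left _
      · exact (h.add_one).mul_right _
    obtain ⟨c, hc⟩ := he
    have hdiv : (mq + 1) * (mq + 1 - 1) / 2 = c := by
      rw [Nat.succ_sub_one]; omega
    rw [hdiv]
    have hcR : ((mq : ℝ) + 1) * (mq : ℝ) = (c : ℝ) + (c : ℝ) := by exact_mod_cast hc
    push_cast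
    linear_combination (-(t : ℝ)) * hcR

lemma key_aux (t k q s : ℕ) (ht : 1 ≤ t) (hs : s < t) :
    (k : ℝ) * ((t : ℝ) * q + s) * 2 ≤
      ((t : ℝ) * ((q : ℝ) * ((q : ℝ) - 1)) + 2 * (q : ℝ) * (s : ℝ)) +
        (t : ℝ) * k * ((k : ℝ) + 1) := by
  have ht1 : (1 : ℝ) ≤ t := by exact_mod_cast ht
  have hs0 : (0 : ℝ) ≤ s := by positivity
  have hsle : (s : ℝ) ≤ (t : ℝ) - 1 := by
    have : (s + 1 : ℕ) ≤ t := hs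
    have := (Nat.cast_le (α := ℝ)).2 this
    push_cast at this; linarith
  rcases Nat.lt_trichotomy k q with h | h | h
  · have hd : (k : ℝ) + 1 ≤ q := by exact_mod_cast Nat.succ_le_of_lt h
    nlinarith [mul_nonneg (mul_nonneg (by linarith : (0:ℝ) ≤ (t:ℝ))
        (by linarith : (0:ℝ) ≤ (q:ℝ) - k - 1)) (by linarith : (0:ℝ) ≤ (q:ℝ) - k),
      mul_nonneg hs0 (by linarith : (0:ℝ) ≤ (q:ℝ) - k)]
  · have hqk : (q : ℝ) = k := by exact_mod_cast h.symm
    rw [hqk]; nlinarith []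
  · have hd : (q : ℝ) + 1 ≤ k := by exact_mod_cast Nat.succ_le_of_lt h
    have hF : (0:ℝ) ≤ (t:ℝ) * ((k:ℝ) - q - 1) :=
      mul_nonneg (by linarith) (by linarith)
    have hx : (0:ℝ) ≤ (t:ℝ) * ((k:ℝ) - q + 1) - 2 * s := by nlinarith [hF]
    have hG := mul_nonneg (by linarith : (0:ℝ) ≤ (k:ℝ) - q) hx
    nlinarith [hG]

lemma key_ineq (t k r : ℕ) (ht : 1 ≤ t) :
    (k : ℝ) * r * 2 ≤ 2 * (barrier t r : ℝ) + (t : ℝ) * k * ((k : ℝ) + 1) := by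
  have hdm : t * (r / t) + r % t = r := Nat.div_add_mod r t
  have hslt : r % t < t := Nat.mod_lt _ (by omega)
  have hr : (r : ℝ) = (t : ℝ) * ((r / t : ℕ) : ℝ) + ((r % t : ℕ) : ℝ) := by
    exact_mod_cast (congrArg (fun n : ℕ => (n : ℝ)) hdm).symm
  rw [barrier_two t r, hr]
  exact key_aux t k (r / t) (r % t) ht hslt

lemma barrier_succ (t n : ℕ) (ht : 1 ≤ t) :
    barrier t (n + 1) = barrier t n + n / t := by
  obtain ⟨k, s, hs, rfl⟩ : ∃ k s, s < t ∧ n = t * k + s :=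
    ⟨n / t, n % t, Nat.mod_lt _ (by omega), (Nat.div_add_mod n t).symm⟩
  have hdiv : (t * k + s) / t = k := by
    rw [Nat.mul_add_div (by omega), Nat.div_eq_of_lt hs]
    omega
  have hmod : (t * k + s) % t = s := by
    rw [Nat.mul_add_mod]; exact Nat.mod_eq_of_lt hs
  rcases Nat.lt_or_ge (s + 1) t with h | h
  · have he : t * k + s + 1 = (s + 1) + t * k := by omega
    have hdiv1 : (t * k + s + 1) / t = k := by
      rw [he, Nat.add_mul_div_left _ _ (by omega : 0 < t), Nat.div_eq_of_lt h, Nat.zero_add]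
    have hmod1 : (t * k + s + 1) % t = s + 1 := by
      rw [he, Nat.add_mul_mod_self_left, Nat.mod_eq_of_lt h]
    unfold barrier
    rw [hdiv, hmod, hdiv1, hmod1, Nat.mul_succ]
    omega
  · have hst : s + 1 = t := by omega
    have h1 : t * k + s + 1 = t * (k + 1) := by rw [Nat.mul_succ]; omega
    have hdiv1 : (t * k + s + 1) / t = k + 1 := by
      rw [h1, Nat.mul_div_cancel_left _ (by omega : 0 < t)]
    have hmod1 : (t * k + s + 1) % t = 0 := by rw [h1, Nat.mul_mod_right]
    unfold barrier
    rw [hdiv, hmod, hdiv1, hmod1, Nat.triangle_succ, Nat.mul_add]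
    have hks : k * s + k = t * k := by
      calc k * s + k = k * (s + 1) := by rw [Nat.mul_succ]
        _ = k * t := by rw [hst]
        _ = t * k := Nat.mul_comm k t
    omega

lemma barrier_kt (t k : ℕ) (ht : 1 ≤ t) :
    2 * (barrier t (k * t) : ℝ) = (t : ℝ) * ((k : ℝ) * ((k : ℝ) - 1)) := by
  have h := barrier_two t (k * t)
  rw [Nat.mul_div_cancel _ (by omega : 0 < t), Nat.mul_mod_left] at h
  simpa using h

lemma newton_eq (p : ℕ) (E : Type*) [NormedField E]
    (t : ℕ) (ht : 1 ≤ t) (f : PowerSeries E)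
    (hf0 : PowerSeries.constantCoeff (R := E) f = 1)
    (hlow : ∀ r : ℕ, 1 ≤ r → PowerSeries.coeff (R := E) r f ≠ 0 →
      (barrier t r : ℝ) ≤ addVal p (PowerSeries.coeff (R := E) r f))
    (htouch : ∀ k : ℕ, 1 ≤ k → PowerSeries.coeff (R := E) (k * t) f ≠ 0 ∧
      addVal p (PowerSeries.coeff (R := E) (k * t) f) = (barrier t (k * t) : ℝ))
    (m : ℕ) : newtonFn p f (m : ℝ) = (barrier t m : ℝ) := by
  have hc0 : PowerSeries.coeff (R := E) 0 f = 1 := by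
    rw [← hf0]; simp
  have hv0 : addVal p (PowerSeries.coeff (R := E) 0 f) = 0 := by
    rw [hc0]; simp [addVal]
  have ht1 : (1 : ℝ) ≤ t := by exact_mod_cast ht
  obtain ⟨q, s, hs, hm⟩ : ∃ q s, s < t ∧ m = t * q + s :=
    ⟨m / t, m % t, Nat.mod_lt _ (by omega), (Nat.div_add_mod m t).symm⟩
  have hdiv : m / t = q := by
    rw [hm, Nat.mul_add_div (by omega), Nat.div_eq_of_lt hs]
    omega
  have hmod : m % t = s := by
    rw [hm, Nat.mul_add_mod]; exact Nat.mod_eq_of_lt hs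
  have hmr : (m : ℝ) = (t : ℝ) * q + s := by rw [hm]; push_cast; ring
  have e1 : 2 * (barrier t m : ℝ) =
      (t : ℝ) * ((q : ℝ) * ((q : ℝ) - 1)) + 2 * (q : ℝ) * (s : ℝ) := by
    have := barrier_two t m
    rw [hdiv, hmod] at this
    exact this
  have hsle : (s : ℝ) ≤ (t : ℝ) - 1 := by
    have : (s + 1 : ℕ) ≤ t := hs
    have := (Nat.cast_le (α := ℝ)).2 this
    push_cast at this; linarith
  have hs0 : (0 : ℝ) ≤ s := by positivity
  have hq0 : (0 : ℝ) ≤ q := by positivity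
  -- upper bound for admissible affine functions
  have hbub : ∀ sl b : ℝ,
      (∀ r : ℕ, PowerSeries.coeff (R := E) r f ≠ 0 →
        sl * r + b ≤ addVal p (PowerSeries.coeff (R := E) r f)) →
      sl * m + b ≤ (barrier t m : ℝ) := by
    intro sl b hadm
    have hb : b ≤ 0 := by
      have := hadm 0 (by rw [hc0]; exact one_ne_zero)
      rw [hv0] at this; simpa using this
    have hA : sl * ((q : ℝ) * t) + b ≤ (barrier t (q * t) : ℝ) := by
      rcases Nat.eq_zero_or_pos q with h | h
      · rw [h]
        simp only [Nat.cast_zero, zero_mul, mul_zero, zero_add, Nat.zero_mul]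
        have : (barrier t 0 : ℝ) = 0 := by simp [barrier]
        rw [this]; linarith
      · have h2 := hadm (q * t) (htouch q h).1
        rw [(htouch q h).2, Nat.cast_mul] at h2
        exact h2
    have hB : sl * (((q : ℝ) + 1) * t) + b ≤ (barrier t ((q + 1) * t) : ℝ) := by
      have h2 := hadm ((q + 1) * t) (htouch (q + 1) (by omega)).1
      rw [(htouch (q + 1) (by omega)).2] at h2
      push_cast at h2
      convert h2 using 3 <;> push_cast <;> ring
    have e2 := barrier_kt t q ht
    have e3 := barrier_kt t (q + 1) ht
    have hts : (0 : ℝ) ≤ (t : ℝ) - s := by linarith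
    have hmul1 := mul_le_mul_of_nonneg_left hA hts
    have hmul2 := mul_le_mul_of_nonneg_left hB hs0
    have hid : (t : ℝ) * (sl * (m : ℝ) + b) =
        ((t : ℝ) - s) * (sl * ((q : ℝ) * t) + b) + (s : ℝ) * (sl * (((q : ℝ) + 1) * t) + b) := by
      rw [hmr]; ring
    have e3' : 2 * (barrier t ((q + 1) * t) : ℝ) =
        (t : ℝ) * (((q : ℝ) + 1) * (((q : ℝ) + 1) - 1)) := by
      have := e3; push_cast at this ⊢; linarith
    have hid2 : ((t : ℝ) - s) * (barrier t (q * t) : ℝ) + (s : ℝ) * (barrier t ((q + 1) * t) : ℝ)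
        = (t : ℝ) * (barrier t m : ℝ) := by
      linear_combination ((t : ℝ) - s) / 2 * e2 + (s : ℝ) / 2 * e3' - (t : ℝ) / 2 * e1
    have hcomb : (t : ℝ) * (sl * m + b) ≤ (t : ℝ) * (barrier t m : ℝ) := by
      rw [hid, ← hid2]; linarith
    exact le_of_mul_le_mul_left hcomb (by linarith)
  -- the supremum-achieving affine function
  have hmem : (barrier t m : ℝ) ∈ {y : ℝ | ∃ sl b : ℝ, y = sl * (m : ℝ) + b ∧
      ∀ r : ℕ, PowerSeries.coeff (R := E) r f ≠ 0 →
        sl * r + b ≤ addVal p (PowerSeries.coeff (R := E) r f)} := by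
    refine ⟨(q : ℝ), (barrier t m : ℝ) - (q : ℝ) * m, by ring, ?_⟩
    have hbeq : 2 * ((barrier t m : ℝ) - (q : ℝ) * m) = -((t : ℝ) * q * ((q : ℝ) + 1)) := by
      rw [hmr]; linear_combination e1
    intro r hr
    rcases Nat.eq_zero_or_pos r with h | h
    · rw [h, hv0]
      have hpos : (0 : ℝ) ≤ (t : ℝ) * q * ((q : ℝ) + 1) := by positivity
      simp only [Nat.cast_zero, mul_zero, zero_add]
      linarith
    · have hkey := key_ineq t q r ht
      have hstep : (q : ℝ) * r + ((barrier t m : ℝ) - (q : ℝ) * m) ≤ (barrier t r : ℝ) := by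
        linarith
      exact hstep.trans (hlow r h hr)
  have hbdd : BddAbove {y : ℝ | ∃ sl b : ℝ, y = sl * (m : ℝ) + b ∧
      ∀ r : ℕ, PowerSeries.coeff (R := E) r f ≠ 0 →
        sl * r + b ≤ addVal p (PowerSeries.coeff (R := E) r f)} := by
    refine ⟨(barrier t m : ℝ), ?_⟩
    rintro y ⟨sl, b, rfl, hadm⟩
    exact hbub sl b hadm
  unfold newtonFn
  apply le_antisymm
  · exact csSup_le ⟨_, hmem⟩ (by rintro y ⟨sl, b, rfl, hadm⟩; exact hbub sl b hadm)
  · exact le_csSup hbdd hmem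

theorem stmt_13 (p : ℕ) [Fact p.Prime] (E : Type*) [NormedField E]
    [IsUltrametricDist E] (hpE : ‖(p : E)‖ = (p : ℝ)⁻¹)
    (t : ℕ) (ht : 1 ≤ t) (f : PowerSeries E)
    (hf0 : PowerSeries.constantCoeff (R := E) f = 1)
    (hlow : ∀ r : ℕ, 1 ≤ r → PowerSeries.coeff (R := E) r f ≠ 0 →
      (barrier t r : ℝ) ≤ addVal p (PowerSeries.coeff (R := E) r f))
    (htouch : ∀ k : ℕ, 1 ≤ k → PowerSeries.coeff (R := E) (k * t) f ≠ 0 ∧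
      addVal p (PowerSeries.coeff (R := E) (k * t) f) = (barrier t (k * t) : ℝ)) :
    ∀ n : ℕ, ((n / t : ℕ) : ℝ) ≤ newtonFn p f (n + 1) - newtonFn p f n ∧
      newtonFn p f (n + 1) - newtonFn p f n ≤ ((n / t : ℕ) : ℝ) + 1 := by
  intro n
  have h1 : newtonFn p f ((n : ℝ) + 1) = (barrier t (n + 1) : ℝ) := by
    have := newton_eq p E t ht f hf0 hlow htouch (n + 1)
    push_cast at this ⊢
    exact this
  have h2 : newtonFn p f (n : ℝ) = (barrier t n : ℝ) := newton_eq p E t ht f hf0 hlow htouch n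
  rw [h1, h2]
  have h3 : (barrier t (n + 1) : ℝ) = (barrier t n : ℝ) + ((n / t : ℕ) : ℝ) := by
    exact_mod_cast congrArg (fun x : ℕ => (x : ℝ)) (barrier_succ t n ht)
  rw [h3]
  constructor <;> linarith
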